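/- For an integer q ≥ 1 define G_q(t) = ∫_{−1}^{1} e^{tu} (1 − u²)^{(q−2)/2} du. Then for any t₁ > 0 and t₂ > 0, G_q(t₂)/G_q(t₁) ≤ exp(|t₁² − t₂²|/(2q)). -/

import Mathlib

open MeasureTheory Real

noncomputable section

/-- `G_q(t) = ∫_{−1}^{1} e^{tu} (1 − u²)^{(q−2)/2} du`. -/
def Gq (q : ℕ) (t : ℝ) : ℝ :=
  ∫ u in Set.Icc (-1 : ℝ) 1, Real.exp (t * u) * (1 - u ^ 2) ^ (((q : ℝ) - 2) / 2)

namespace Stmt17Aux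

/-- Auxiliary: `H_q(t) = ∫_{−1}^{1} e^{tu} (1 − u²)^{q/2} du`. -/
def Hq (q : ℕ) (t : ℝ) : ℝ :=
  ∫ u in Set.Icc (-1 : ℝ) 1, Real.exp (t * u) * (1 - u ^ 2) ^ ((q : ℝ) / 2)

lemma meas_w (r : ℝ) : Measurable fun u : ℝ => (1 - u ^ 2) ^ r :=
  by
  have h : Measurable fun u : ℝ => 1 - u ^ 2 := measurable_const.sub (measurable_id.pow_const 2)
  fun_prop

lemma integrable_w {r : ℝ} (hr : -1 < r) :
    IntegrableOn (fun u : ℝ => (1 - u ^ 2) ^ r) (Set.Icc (-1) 1) := by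
  rcases le_or_gt 0 r with h0 | h0
  · exact ((Real.continuous_rpow_const h0).comp
      (continuous_const.sub (continuous_pow 2))).continuousOn.integrableOn_compact isCompact_Icc
  · have hI1 : IntervalIntegrable (fun u : ℝ => (1 - u) ^ r) volume (-1) 1 := by
      have := (intervalIntegral.intervalIntegrable_rpow' (a := 0) (b := 2) hr).comp_sub_left 1
      norm_num at this
      exact this.symm
    have hI2 : IntervalIntegrable (fun u : ℝ => (1 + u) ^ r) volume (-1) 1 := by
      have := (intervalIntegral.intervalIntegrable_rpow' (a := 0) (b := 2) hr).comp_add_left 1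
      norm_num at this
      exact this
    have hg : IntegrableOn (fun u : ℝ => (1 - u) ^ r + (1 + u) ^ r) (Set.Ioc (-1 : ℝ) 1) :=
      (intervalIntegrable_iff_integrableOn_Ioc_of_le (by norm_num)).1 (hI1.add hI2)
    rw [integrableOn_Icc_iff_integrableOn_Ioc]
    refine Integrable.mono hg ((meas_w r).aestronglyMeasurable) ?_
    filter_upwards [ae_restrict_mem measurableSet_Ioc] with u hu
    have h1u : (0 : ℝ) ≤ 1 - u := by linarith [hu.2]
    have h1u' : (0 : ℝ) ≤ 1 + u := by linarith [hu.1.le]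
    have hsq : (1 - u ^ 2 : ℝ) = (1 - u) * (1 + u) := by ring
    have hw : (0 : ℝ) ≤ (1 - u ^ 2) ^ r := Real.rpow_nonneg (by nlinarith) r
    have ha : (0 : ℝ) ≤ (1 - u) ^ r := Real.rpow_nonneg h1u r
    have hb : (0 : ℝ) ≤ (1 + u) ^ r := Real.rpow_nonneg h1u' r
    rw [Real.norm_of_nonneg hw, Real.norm_of_nonneg (by positivity)]
    rw [hsq, Real.mul_rpow h1u h1u']
    rcases le_total u 0 with hu0 | hu0
    · have h1 : (1 - u : ℝ) ^ r ≤ 1 :=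
        Real.rpow_le_one_of_one_le_of_nonpos (by linarith) h0.le
      calc (1 - u) ^ r * (1 + u) ^ r ≤ 1 * (1 + u) ^ r := by
            exact mul_le_mul_of_nonneg_right h1 hb
        _ = (1 + u) ^ r := one_mul _
        _ ≤ (1 - u) ^ r + (1 + u) ^ r := le_add_of_nonneg_left ha
    · have h1 : (1 + u : ℝ) ^ r ≤ 1 :=
        Real.rpow_le_one_of_one_le_of_nonpos (by linarith) h0.le
      calc (1 - u) ^ r * (1 + u) ^ r ≤ (1 - u) ^ r * 1 := by
            exact mul_le_mul_of_nonneg_left h1 ha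
        _ = (1 - u) ^ r := mul_one _
        _ ≤ (1 - u) ^ r + (1 + u) ^ r := le_add_of_nonneg_right hb

lemma integrable_mul_w {r : ℝ} (hr : -1 < r) {φ : ℝ → ℝ} (hφ : Continuous φ) :
    IntegrableOn (fun u : ℝ => φ u * (1 - u ^ 2) ^ r) (Set.Icc (-1) 1) := by
  obtain ⟨C, hC⟩ := (isCompact_Icc (a := (-1 : ℝ)) (b := 1)).exists_bound_of_continuousOn
    hφ.continuousOn
  refine Integrable.mono ((integrable_w hr).const_mul C)
    (hφ.measurable.mul (meas_w r)).aestronglyMeasurable ?_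
  filter_upwards [ae_restrict_mem measurableSet_Icc] with u hu
  have hw : (0 : ℝ) ≤ (1 - u ^ 2) ^ r := by
    apply Real.rpow_nonneg
    rcases Set.mem_Icc.1 hu with ⟨h1, h2⟩; nlinarith
  have hCu := hC u hu
  rw [Real.norm_eq_abs, Real.norm_eq_abs, abs_mul, abs_mul, abs_of_nonneg hw]
  have : |φ u| * (1 - u ^ 2) ^ r ≤ C * (1 - u ^ 2) ^ r :=
    mul_le_mul_of_nonneg_right (by simpa using hCu) hw
  exact this.trans (mul_le_mul_of_nonneg_right (le_abs_self C) hw)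

lemma hr_gt {q : ℕ} (hq : 1 ≤ q) : (-1 : ℝ) < ((q : ℝ) - 2) / 2 := by
  have : (1 : ℝ) ≤ (q : ℝ) := by exact_mod_cast hq
  linarith

lemma hp_pos {q : ℕ} (hq : 1 ≤ q) : (0 : ℝ) < (q : ℝ) / 2 := by
  have : (1 : ℝ) ≤ (q : ℝ) := by exact_mod_cast hq
  linarith

lemma Gq_pos {q : ℕ} (hq : 1 ≤ q) (t : ℝ) : 0 < Gq q t := by
  have hr := hr_gt hq
  rw [Gq]
  rw [setIntegral_pos_iff_support_of_nonneg_ae]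
  · refine lt_of_lt_of_le ?_ (measure_mono (?_ : Set.Ioo (-1 : ℝ) 1 ⊆ _))
    · rw [Real.volume_Ioo]; norm_num
    · intro u hu
      have h1 : (0 : ℝ) < 1 - u ^ 2 := by
        rcases hu with ⟨h1, h2⟩; nlinarith
      constructor
      · exact ne_of_gt (mul_pos (Real.exp_pos _) (Real.rpow_pos_of_pos h1 _))
      · exact Set.Ioo_subset_Icc_self hu
  · filter_upwards [ae_restrict_mem measurableSet_Icc] with u hu
    have hw : (0 : ℝ) ≤ (1 - u ^ 2) ^ (((q : ℝ) - 2) / 2) := by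
      apply Real.rpow_nonneg
      rcases Set.mem_Icc.1 hu with ⟨h1, h2⟩; nlinarith
    exact mul_nonneg (Real.exp_pos _).le hw
  · exact integrable_mul_w hr (Real.continuous_exp.comp (continuous_const.mul continuous_id))

lemma Hq_nonneg (q : ℕ) (t : ℝ) : 0 ≤ Hq q t := by
  apply setIntegral_nonneg measurableSet_Icc
  intro u hu
  have hw : (0 : ℝ) ≤ (1 - u ^ 2) ^ ((q : ℝ) / 2) := by
    apply Real.rpow_nonneg
    rcases Set.mem_Icc.1 hu with ⟨h1, h2⟩; nlinarith
  exact mul_nonneg (Real.exp_pos _).le hw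

lemma Hq_le_Gq {q : ℕ} (hq : 1 ≤ q) (t : ℝ) : Hq q t ≤ Gq q t := by
  rw [Hq, Gq]
  apply setIntegral_mono_on
  · exact integrable_mul_w (by linarith [hp_pos hq]) (Real.continuous_exp.comp
      (continuous_const.mul continuous_id))
  · exact integrable_mul_w (hr_gt hq) (Real.continuous_exp.comp
      (continuous_const.mul continuous_id))
  · exact measurableSet_Icc
  · intro u hu
    rcases Set.mem_Icc.1 hu with ⟨h1, h2⟩
    have hx : (0 : ℝ) ≤ 1 - u ^ 2 := by nlinarith
    rcases eq_or_lt_of_le hx with hx0 | hx0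
    · rw [← hx0, Real.zero_rpow (ne_of_gt (hp_pos hq))]
      have : (0 : ℝ) ≤ (0 : ℝ) ^ (((q : ℝ) - 2) / 2) := Real.rpow_nonneg le_rfl _
      nlinarith [Real.exp_pos (t * u), this]
    · apply mul_le_mul_of_nonneg_left _ (Real.exp_pos (t * u)).le
      apply Real.rpow_le_rpow_of_exponent_ge hx0 (by nlinarith)
      linarith

/-- derivative under the integral sign -/
lemma hasDerivAt_Gq_integral {q : ℕ} (hq : 1 ≤ q) (t : ℝ) :
    HasDerivAt (Gq q)
      (∫ u in Set.Icc (-1 : ℝ) 1, u * Real.exp (t * u) * (1 - u ^ 2) ^ (((q : ℝ) - 2) / 2)) t := by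
  have hr := hr_gt hq
  have key := hasDerivAt_integral_of_dominated_loc_of_deriv_le
    (μ := volume.restrict (Set.Icc (-1 : ℝ) 1))
    (F := fun t u => Real.exp (t * u) * (1 - u ^ 2) ^ (((q : ℝ) - 2) / 2))
    (F' := fun t u => u * Real.exp (t * u) * (1 - u ^ 2) ^ (((q : ℝ) - 2) / 2))
    (x₀ := t) (bound := fun u => Real.exp (|t| + 1) * (1 - u ^ 2) ^ (((q : ℝ) - 2) / 2))
    (s := Metric.ball t 1) (Metric.ball_mem_nhds t one_pos) ?_ ?_ ?_ ?_ ?_ ?_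
  · exact key.2
  · filter_upwards with x
    exact ((Real.continuous_exp.comp (continuous_const.mul continuous_id)).measurable.mul
      (meas_w _)).aestronglyMeasurable
  · exact integrable_mul_w hr (Real.continuous_exp.comp (continuous_const.mul continuous_id))
  · exact (((measurable_id.mul ((Real.continuous_exp.comp
      (continuous_const.mul continuous_id)).measurable)).mul (meas_w _))).aestronglyMeasurable
  · filter_upwards [ae_restrict_mem measurableSet_Icc] with u hu x hx
    rcases Set.mem_Icc.1 hu with ⟨h1, h2⟩
    have hw : (0 : ℝ) ≤ (1 - u ^ 2) ^ (((q : ℝ) - 2) / 2) := by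
      apply Real.rpow_nonneg; nlinarith
    have hxu : x * u ≤ |t| + 1 := by
      have hx' : |x - t| < 1 := by simpa [Real.dist_eq] using Metric.mem_ball.1 hx
      have : |x * u| ≤ |x| := by
        rw [abs_mul]
        calc |x| * |u| ≤ |x| * 1 := by
              apply mul_le_mul_of_nonneg_left _ (abs_nonneg x)
              rw [abs_le]; exact ⟨h1, h2⟩
          _ = |x| := mul_one _
      have hxt : |x| ≤ |t| + 1 := by
        calc |x| = |t + (x - t)| := by ring_nf
          _ ≤ |t| + |x - t| := abs_add_le _ _
          _ ≤ |t| + 1 := by linarith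
      calc x * u ≤ |x * u| := le_abs_self _
        _ ≤ |x| := this
        _ ≤ |t| + 1 := hxt
    rw [Real.norm_eq_abs, abs_mul, abs_mul, abs_of_nonneg hw,
      abs_of_nonneg (Real.exp_pos _).le]
    have hau : |u| ≤ 1 := by rw [abs_le]; exact ⟨h1, h2⟩
    have hexp : Real.exp (x * u) ≤ Real.exp (|t| + 1) := Real.exp_le_exp.2 hxu
    calc |u| * Real.exp (x * u) * (1 - u ^ 2) ^ (((q : ℝ) - 2) / 2)
        ≤ 1 * Real.exp (|t| + 1) * (1 - u ^ 2) ^ (((q : ℝ) - 2) / 2) := by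
          apply mul_le_mul_of_nonneg_right _ hw
          exact mul_le_mul hau hexp (Real.exp_pos _).le zero_le_one
      _ = Real.exp (|t| + 1) * (1 - u ^ 2) ^ (((q : ℝ) - 2) / 2) := by ring
  · exact integrable_mul_w hr continuous_const
  · filter_upwards with u x _
    have h1 : HasDerivAt (fun x : ℝ => x * u) u x := by
      simpa using (hasDerivAt_id x).mul_const u
    have h2 : HasDerivAt (fun x : ℝ => Real.exp (x * u)) (Real.exp (x * u) * u) x := h1.exp
    have := h2.mul_const ((1 - u ^ 2) ^ (((q : ℝ) - 2) / 2))
    convert this using 1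
    · rfl
    ring

/-- integration by parts identity: `q ⬝ ∫ u e^{tu} (1−u²)^{(q−2)/2} = t ⬝ H_q(t)`. -/
lemma ibp {q : ℕ} (hq : 1 ≤ q) (t : ℝ) :
    (q : ℝ) * (∫ u in Set.Icc (-1 : ℝ) 1,
        u * Real.exp (t * u) * (1 - u ^ 2) ^ (((q : ℝ) - 2) / 2)) = t * Hq q t := by
  have hr := hr_gt hq
  have hp := hp_pos hq
  set p : ℝ := (q : ℝ) / 2 with hpdef
  set r : ℝ := ((q : ℝ) - 2) / 2 with hrdef
  have hpr : p - 1 = r := by rw [hpdef, hrdef]; ring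
  -- the function and its derivative
  set Φ : ℝ → ℝ := fun u => Real.exp (t * u) * (1 - u ^ 2) ^ p with hΦ
  set Φ' : ℝ → ℝ := fun u =>
    t * (Real.exp (t * u) * (1 - u ^ 2) ^ p) -
      (q : ℝ) * (u * Real.exp (t * u) * (1 - u ^ 2) ^ r) with hΦ'
  have hcont : ContinuousOn Φ (Set.Icc (-1 : ℝ) 1) := by
    apply Continuous.continuousOn
    exact (Real.continuous_exp.comp (continuous_const.mul continuous_id)).mul
      ((Real.continuous_rpow_const hp.le).comp (continuous_const.sub (continuous_pow 2)))
  have hint1 : IntegrableOn (fun u : ℝ => Real.exp (t * u) * (1 - u ^ 2) ^ p)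
      (Set.Icc (-1 : ℝ) 1) :=
    integrable_mul_w (by linarith) (Real.continuous_exp.comp (continuous_const.mul continuous_id))
  have hint2 : IntegrableOn (fun u : ℝ => u * Real.exp (t * u) * (1 - u ^ 2) ^ r)
      (Set.Icc (-1 : ℝ) 1) :=
    integrable_mul_w hr (continuous_id.mul
      (Real.continuous_exp.comp (continuous_const.mul continuous_id)))
  have hIoc1 := ((integrableOn_Icc_iff_integrableOn_Ioc (ha := enorm_ne_top)).1 hint1)
  have hIoc2 := ((integrableOn_Icc_iff_integrableOn_Ioc (ha := enorm_ne_top)).1 hint2)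
  have hii1 : IntervalIntegrable (fun u : ℝ => Real.exp (t * u) * (1 - u ^ 2) ^ p)
      volume (-1) 1 := (intervalIntegrable_iff_integrableOn_Ioc_of_le (by norm_num)).2 hIoc1
  have hii2 : IntervalIntegrable (fun u : ℝ => u * Real.exp (t * u) * (1 - u ^ 2) ^ r)
      volume (-1) 1 := (intervalIntegrable_iff_integrableOn_Ioc_of_le (by norm_num)).2 hIoc2
  have hii : IntervalIntegrable Φ' volume (-1) 1 := by
    rw [hΦ']
    exact (hii1.const_mul t).sub (hii2.const_mul (q : ℝ))
  have hderiv : ∀ u ∈ Set.Ioo (-1 : ℝ) 1, HasDerivWithinAt Φ (Φ' u) (Set.Ioi u) u := by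
    intro u hu
    rcases hu with ⟨h1, h2⟩
    have hbase : (0 : ℝ) < 1 - u ^ 2 := by nlinarith
    have hd1 : HasDerivAt (fun u : ℝ => t * u) t u := by
      simpa using (hasDerivAt_id u).const_mul t
    have hd2 : HasDerivAt (fun u : ℝ => Real.exp (t * u)) (Real.exp (t * u) * t) u := hd1.exp
    have hd3 : HasDerivAt (fun u : ℝ => 1 - u ^ 2) (-(2 * u)) u := by
      simpa using (hasDerivAt_pow 2 u).const_sub 1
    have hd4 : HasDerivAt (fun u : ℝ => (1 - u ^ 2) ^ p)
        (-(2 * u) * p * (1 - u ^ 2) ^ (p - 1)) u :=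
      hd3.rpow_const (Or.inl (ne_of_gt hbase))
    have hd5 := hd2.mul hd4
    apply HasDerivAt.hasDerivWithinAt
    convert hd5 using 1
    · rfl
    · rfl
    rw [hpr, hΦ']
    have h2p : 2 * p = (q : ℝ) := by rw [hpdef]; ring
    ring_nf
    rw [← h2p]; ring
  have hftc := intervalIntegral.integral_eq_sub_of_hasDeriv_right_of_le
    (by norm_num : (-1 : ℝ) ≤ 1) hcont hderiv hii
  have hΦ1 : Φ 1 = 0 := by
    rw [hΦ]; simp [Real.zero_rpow (ne_of_gt hp)]
  have hΦm1 : Φ (-1) = 0 := by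
    rw [hΦ]; norm_num [Real.zero_rpow (ne_of_gt hp)]
  rw [hΦ1, hΦm1, sub_zero] at hftc
  -- split the interval integral
  have hsplit : ∫ u in (-1 : ℝ)..1, Φ' u =
      t * (∫ u in (-1 : ℝ)..1, Real.exp (t * u) * (1 - u ^ 2) ^ p) -
      (q : ℝ) * (∫ u in (-1 : ℝ)..1, u * Real.exp (t * u) * (1 - u ^ 2) ^ r) := by
    rw [hΦ']
    rw [intervalIntegral.integral_sub (hii1.const_mul t) (hii2.const_mul (q : ℝ)),
      intervalIntegral.integral_const_mul, intervalIntegral.integral_const_mul]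
  have hIcc1 : (∫ u in (-1 : ℝ)..1, Real.exp (t * u) * (1 - u ^ 2) ^ p) = Hq q t := by
    rw [intervalIntegral.integral_of_le (by norm_num : (-1 : ℝ) ≤ 1), Hq,
      ← integral_Icc_eq_integral_Ioc]
  have hIcc2 : (∫ u in (-1 : ℝ)..1, u * Real.exp (t * u) * (1 - u ^ 2) ^ r) =
      ∫ u in Set.Icc (-1 : ℝ) 1, u * Real.exp (t * u) * (1 - u ^ 2) ^ r := by
    rw [intervalIntegral.integral_of_le (by norm_num : (-1 : ℝ) ≤ 1),
      ← integral_Icc_eq_integral_Ioc]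
  rw [hsplit, hIcc1, hIcc2] at hftc
  linarith

lemma hasDerivAt_Gq {q : ℕ} (hq : 1 ≤ q) (t : ℝ) :
    HasDerivAt (Gq q) (t / q * Hq q t) t := by
  have hq0 : (0 : ℝ) < (q : ℝ) := by exact_mod_cast Nat.pos_of_ne_zero (by omega)
  have h := hasDerivAt_Gq_integral hq t
  have hibp := ibp hq t
  have : (∫ u in Set.Icc (-1 : ℝ) 1,
      u * Real.exp (t * u) * (1 - u ^ 2) ^ (((q : ℝ) - 2) / 2)) = t / q * Hq q t := by
    rw [div_mul_eq_mul_div, eq_div_iff hq0.ne']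
    linarith
  rwa [this] at h

end Stmt17Aux

open Stmt17Aux in
/-- For an integer `q ≥ 1` and any `t₁ > 0`, `t₂ > 0`,
`G_q(t₂)/G_q(t₁) ≤ exp(|t₁² − t₂²|/(2q))`. -/
theorem stmt17 (q : ℕ) (hq : 1 ≤ q) (t₁ t₂ : ℝ) (h₁ : 0 < t₁) (h₂ : 0 < t₂) :
    Gq q t₂ / Gq q t₁ ≤ Real.exp (|t₁ ^ 2 - t₂ ^ 2| / (2 * q)) := by
  have hq0 : (0 : ℝ) < (q : ℝ) := by exact_mod_cast Nat.pos_of_ne_zero (by omega)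
  have hG1 : 0 < Gq q t₁ := Gq_pos hq t₁
  have hG2 : 0 < Gq q t₂ := Gq_pos hq t₂
  have hdiff : Differentiable ℝ (Gq q) := fun x => (hasDerivAt_Gq hq x).differentiableAt
  rcases le_total t₂ t₁ with hle | hle
  · -- monotone case
    have mono : MonotoneOn (Gq q) (Set.Icc t₂ t₁) := by
      apply monotoneOn_of_deriv_nonneg (convex_Icc _ _) hdiff.continuous.continuousOn
        hdiff.differentiableOn
      intro x hx
      rw [interior_Icc] at hx
      rw [(hasDerivAt_Gq hq x).deriv]
      have hx0 : 0 < x := lt_trans h₂ hx.1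
      have := Hq_nonneg q x
      positivity
    have hGle : Gq q t₂ ≤ Gq q t₁ :=
      mono (Set.left_mem_Icc.2 hle) (Set.right_mem_Icc.2 hle) hle
    calc Gq q t₂ / Gq q t₁ ≤ 1 := div_le_one_of_le₀ hGle hG1.le
      _ ≤ Real.exp (|t₁ ^ 2 - t₂ ^ 2| / (2 * q)) := Real.one_le_exp (by positivity)
  · -- antitone case for F t = Gq q t * exp (-t²/(2q))
    set F : ℝ → ℝ := fun t => Gq q t * Real.exp (-(t ^ 2) / (2 * q)) with hF
    have hFd : ∀ x : ℝ, HasDerivAt F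
        ((x / q * Hq q x - x / q * Gq q x) * Real.exp (-(x ^ 2) / (2 * q))) x := by
      intro x
      have h1 : HasDerivAt (fun t : ℝ => -(t ^ 2) / (2 * q)) (-(2 * x) / (2 * q)) x := by
        simpa using ((hasDerivAt_pow 2 x).neg).div_const (2 * q)
      have h2 : HasDerivAt (fun t : ℝ => Real.exp (-(t ^ 2) / (2 * q)))
          (Real.exp (-(x ^ 2) / (2 * q)) * (-(2 * x) / (2 * q))) x := h1.exp
      have h3 := (hasDerivAt_Gq hq x).mul h2
      convert h3 using 1
      · rfl
      · rfl
      · rfl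
      ring
    have anti : AntitoneOn F (Set.Icc t₁ t₂) := by
      apply antitoneOn_of_deriv_nonpos (convex_Icc _ _)
      · exact Continuous.continuousOn (by
          exact hdiff.continuous.mul
            (Real.continuous_exp.comp ((continuous_pow 2).neg.div_const (2 * (q:ℝ)))))
      · intro x _
        exact ((hFd x).differentiableAt).differentiableWithinAt
      · intro x hx
        rw [interior_Icc] at hx
        rw [(hFd x).deriv]
        have hx0 : 0 < x := lt_trans h₁ hx.1
        have hHG : Hq q x ≤ Gq q x := Hq_le_Gq hq x
        apply mul_nonpos_of_nonpos_of_nonneg _ (Real.exp_pos _).le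
        have hxq : 0 ≤ x / q := by positivity
        nlinarith
    have hFle : F t₂ ≤ F t₁ :=
      anti (Set.left_mem_Icc.2 hle) (Set.right_mem_Icc.2 hle) hle
    have habs : |t₁ ^ 2 - t₂ ^ 2| = t₂ ^ 2 - t₁ ^ 2 := by
      rw [abs_sub_comm]
      apply abs_of_nonneg
      nlinarith
    rw [habs]
    rw [div_le_iff₀ hG1]
    have key : Gq q t₂ ≤ Gq q t₁ * Real.exp ((t₂ ^ 2 - t₁ ^ 2) / (2 * q)) := by
      have := mul_le_mul_of_nonneg_right hFle (Real.exp_pos ((t₂ ^ 2) / (2 * q))).le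
      rw [hF] at this
      simp only [mul_assoc, ← Real.exp_add] at this
      have e1 : -(t₂ ^ 2) / (2 * (q : ℝ)) + t₂ ^ 2 / (2 * q) = 0 := by ring
      have e2 : -(t₁ ^ 2) / (2 * (q : ℝ)) + t₂ ^ 2 / (2 * q) = (t₂ ^ 2 - t₁ ^ 2) / (2 * q) := by
        ring
      rw [e1, e2, Real.exp_zero, mul_one] at this
      exact this
    linarith [key]
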